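/- Let G be a finite group and σ, τ : G → G group endomorphisms. Then every (σ,τ)-derivation D of ℂ[G] is inner: there exists p ∈ ℂ[G] such that D(x) = p·τ(x) − σ(x)·p for all x ∈ ℂ[G]. -/

import Mathlib

/-- Extension of a group endomorphism to a ℂ-algebra endomorphism of `ℂ[G]`. -/
noncomputable def algExt {G : Type*} [Group G] (σ : G →* G) :
    MonoidAlgebra ℂ G →ₐ[ℂ] MonoidAlgebra ℂ G :=
  MonoidAlgebra.mapDomainAlgHom ℂ ℂ σ

lemma algExt_of {G : Type*} [Group G] (σ : G →* G) (g : G) :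
    algExt σ (MonoidAlgebra.of ℂ G g) = MonoidAlgebra.of ℂ G (σ g) := by
  simp [algExt, MonoidAlgebra.of_apply]

/-- if `G` is a finite group, then every `(σ,τ)`-derivation of `ℂ[G]`
is inner: `D = δ_p` for some `p ∈ ℂ[G]`. -/
theorem sigma_tau_derivation_inner_of_finite
    {G : Type*} [Group G] [Finite G] (σ τ : G →* G)
    (D : MonoidAlgebra ℂ G →ₗ[ℂ] MonoidAlgebra ℂ G)
    (hD : ∀ a b : MonoidAlgebra ℂ G, D (a * b) = D a * algExt τ b + algExt σ a * D b) :
    ∃ p : MonoidAlgebra ℂ G, ∀ x : MonoidAlgebra ℂ G,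
      D x = p * algExt τ x - algExt σ x * p := by
  classical
  have : Fintype G := Fintype.ofFinite G
  let o : G → MonoidAlgebra ℂ G := fun g => MonoidAlgebra.of ℂ G g
  have hoo : ∀ g h : G, o g * o h = o (g * h) := fun g h => (map_mul (MonoidAlgebra.of ℂ G) g h).symm
  set n : ℂ := (Fintype.card G : ℂ) with hn'
  have hn : n ≠ 0 := Nat.cast_ne_zero.mpr Fintype.card_ne_zero
  set p : MonoidAlgebra ℂ G := n⁻¹ • ∑ g : G, D (o g) * o ((τ g)⁻¹) with hp
  have key : ∀ h : G, D (MonoidAlgebra.of ℂ G h)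
      = p * MonoidAlgebra.of ℂ G (τ h) - MonoidAlgebra.of ℂ G (σ h) * p := by
    intro h
    have hmul : ∀ g : G, o (σ h) * D (o g) = D (o (h * g)) - D (o h) * o (τ g) := by
      intro g
      have h1 := hD (o h) (o g)
      rw [hoo h g, algExt_of, algExt_of] at h1
      rw [h1]
      abel
    have hleft : p * o (τ h) = n⁻¹ • ∑ g : G, D (o (h * g)) * o ((τ g)⁻¹) := by
      rw [hp, smul_mul_assoc, Finset.sum_mul]
      congr 1
      refine Fintype.sum_equiv (Equiv.mulLeft h⁻¹) _ _ fun g => ?_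
      simp only [Equiv.coe_mulLeft]
      rw [mul_assoc, hoo, mul_inv_cancel_left]
      congr 2
      simp [mul_inv_rev]
    have hright : o (σ h) * p = (n⁻¹ • ∑ g : G, D (o (h * g)) * o ((τ g)⁻¹)) - D (o h) := by
      rw [hp, mul_smul_comm, Finset.mul_sum]
      have step : ∀ g : G, o (σ h) * (D (o g) * o ((τ g)⁻¹))
          = D (o (h * g)) * o ((τ g)⁻¹) - D (o h) := by
        intro g
        rw [← mul_assoc, hmul g, sub_mul, mul_assoc, hoo, mul_inv_cancel,
          show o (1 : G) = 1 from map_one (MonoidAlgebra.of ℂ G), mul_one]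
      rw [Finset.sum_congr rfl fun g _ => step g, Finset.sum_sub_distrib,
        Finset.sum_const, Finset.card_univ, smul_sub,
        ← Nat.cast_smul_eq_nsmul ℂ (Fintype.card G) (D (o h)), smul_smul, ← hn',
        inv_mul_cancel₀ hn, one_smul]
    show D (o h) = p * o (τ h) - o (σ h) * p
    rw [hleft, hright]
    abel
  refine ⟨p, ?_⟩
  intro x
  induction x using MonoidAlgebra.induction_on with
  | of g => rw [algExt_of, algExt_of]; exact key g
  | add f g hf hg => simp only [map_add, hf, hg, mul_add, add_mul]; abel
  | smul r f hf =>
      simp only [map_smul, hf, smul_sub, mul_smul_comm, smul_mul_assoc]
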